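/- arXiv:1409.8611 — 5 statements merged into one kernel-verified Lean document; each statement's English description precedes it below -/
import Mathlib

section
/- Let V be a finite-dimensional vector space over a field, and let F', K', K be subspaces with K' ⊆ K and K + F' = V. Set X₁ = K' + F' and X₂ = K ∩ X₁. Then there exists a subspace U ⊆ K such that K = X₂ ⊕ U and V = X₁ ⊕ U (internal direct sums). -/
/-- Let `V` be a finite-dimensional vector space over a field, subspaces `F'`, `K'`, `K`
with `K' ⊆ K` and `K + F' = V`. Set `X₁ = K' + F'`, `X₂ = K ∩ X₁`. Then there is a
subspace `U ⊆ K` with `K = X₂ ⊕ U` and `V = X₁ ⊕ U` (internal direct sums). -/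
theorem stmt_1 (𝕜 V : Type*) [Field 𝕜] [AddCommGroup V] [Module 𝕜 V]
    [FiniteDimensional 𝕜 V]
    (F' K' K : Submodule 𝕜 V) (hK'K : K' ≤ K) (hsum : K ⊔ F' = ⊤) :
    ∃ U : Submodule 𝕜 V, U ≤ K ∧
      (K ⊓ (K' ⊔ F')) ⊓ U = ⊥ ∧ (K ⊓ (K' ⊔ F')) ⊔ U = K ∧
      (K' ⊔ F') ⊓ U = ⊥ ∧ (K' ⊔ F') ⊔ U = ⊤ := by
  set X₁ := K' ⊔ F' with hX₁
  set X₂ := K ⊓ X₁ with hX₂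
  obtain ⟨W, hW⟩ := Submodule.exists_isCompl X₂
  refine ⟨K ⊓ W, inf_le_left, ?_, ?_, ?_, ?_⟩
  · -- X₂ ⊓ (K ⊓ W) = ⊥
    have : X₂ ⊓ (K ⊓ W) ≤ X₂ ⊓ W := inf_le_inf_left _ inf_le_right
    rw [hW.inf_eq_bot] at this
    exact le_bot_iff.mp this
  · -- X₂ ⊔ (K ⊓ W) = K
    have h := sup_inf_assoc_of_le W (inf_le_left : X₂ ≤ K)
    rw [hW.sup_eq_top, inf_comm W K] at h
    simpa using h.symm
  · -- X₁ ⊓ (K ⊓ W) = ⊥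
    have h1 : X₁ ⊓ (K ⊓ W) ≤ X₂ ⊓ W :=
      le_inf (le_inf (le_trans inf_le_right inf_le_left) inf_le_left)
        (le_trans inf_le_right inf_le_right)
    rw [hW.inf_eq_bot] at h1
    exact le_bot_iff.mp h1
  · -- X₁ ⊔ (K ⊓ W) = ⊤
    have hK : K ≤ X₁ ⊔ (K ⊓ W) := by
      have h := sup_inf_assoc_of_le W (inf_le_left : X₂ ≤ K)
      rw [hW.sup_eq_top, inf_comm W K] at h
      calc K = ⊤ ⊓ K := (top_inf_eq K).symm
        _ = X₂ ⊔ K ⊓ W := by rw [hX₂]; exact h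
        _ ≤ X₁ ⊔ K ⊓ W := sup_le_sup_right inf_le_right _
    have hF : F' ≤ X₁ ⊔ (K ⊓ W) := le_trans le_sup_right le_sup_left
    rw [← top_le_iff, ← hsum]
    exact sup_le hK hF
end

section
/- Let A, B : X → Y be two surjective linear maps between finite-dimensional vector spaces over a field. Define increasing chains of subspaces of X by F₀ = 0, F_{k+1} = A⁻¹(B(F_k)) and G₀ = 0, G_{k+1} = B⁻¹(A(G_k)). Then both chains stabilize, and their stable values coincide: there exists N such that F_N = F_{N+1}, G_N = G_{N+1}, and F_N = G_N. Moreover ker A ⊆ F_N and ker B ⊆ F_N. -/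
set_option linter.unusedSectionVars false

open Module Submodule LinearMap

section aux

variable {𝕜 X Y : Type*} [Field 𝕜] [AddCommGroup X] [Module 𝕜 X]
    [AddCommGroup Y] [Module 𝕜 Y] [FiniteDimensional 𝕜 X] [FiniteDimensional 𝕜 Y]

private lemma aux_map (f : X →ₗ[𝕜] Y) (p : Submodule 𝕜 X) :
    finrank 𝕜 (p.map f) + finrank 𝕜 ↥(LinearMap.ker f ⊓ p) = finrank 𝕜 p := by
  have h := LinearMap.finrank_range_add_finrank_ker (f.domRestrict p)
  rw [LinearMap.range_domRestrict, LinearMap.ker_domRestrict] at h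
  have e : Submodule.comap p.subtype (LinearMap.ker f)
      = Submodule.comap p.subtype (LinearMap.ker f ⊓ p) := by
    ext x; simp [x.2]
  rw [e, (Submodule.comapSubtypeEquivOfLe
    (inf_le_right : LinearMap.ker f ⊓ p ≤ p)).finrank_eq] at h
  exact h

private lemma aux_comap (f : X →ₗ[𝕜] Y) (hf : Function.Surjective f) (S : Submodule 𝕜 Y) :
    finrank 𝕜 (S.comap f) = finrank 𝕜 S + finrank 𝕜 (LinearMap.ker f) := by
  have h := aux_map f (S.comap f)
  rw [Submodule.map_comap_eq_of_surjective hf] at h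
  have hk : LinearMap.ker f ⊓ S.comap f = LinearMap.ker f := by
    refine inf_eq_left.mpr fun x hx => ?_
    simp only [Submodule.mem_comap, LinearMap.mem_ker.mp hx]
    exact S.zero_mem
  rw [hk] at h
  omega

private lemma aux_key (A B : X →ₗ[𝕜] Y) (hA : Function.Surjective A)
    (hB : Function.Surjective B) (F G : ℕ → Submodule 𝕜 X)
    (hG0 : G 0 = ⊥) (hGs : ∀ k, G (k + 1) = Submodule.comap B (Submodule.map A (G k)))
    (N : ℕ) (hFs : F (N + 1) = Submodule.comap A (Submodule.map B (F N)))
    (hFN : F (N + 1) = F N) :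
    LinearMap.ker B ≤ F N ∧ ∀ k, G k ≤ F N := by
  have hstab : Submodule.comap A (Submodule.map B (F N)) = F N := hFs.symm.trans hFN
  -- dim ker A = dim ker B
  have hkAB : finrank 𝕜 (LinearMap.ker A) = finrank 𝕜 (LinearMap.ker B) := by
    have h1 := LinearMap.finrank_range_add_finrank_ker A
    have h2 := LinearMap.finrank_range_add_finrank_ker B
    rw [LinearMap.range_eq_top.mpr hA, finrank_top] at h1
    rw [LinearMap.range_eq_top.mpr hB, finrank_top] at h2
    omega
  have d1 : finrank 𝕜 (F N) = finrank 𝕜 (Submodule.map B (F N)) +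
      finrank 𝕜 (LinearMap.ker A) := by
    have := aux_comap A hA (Submodule.map B (F N))
    rwa [hstab] at this
  have d2 := aux_map B (F N)
  have hfr : finrank 𝕜 (LinearMap.ker B) ≤ finrank 𝕜 ↥(LinearMap.ker B ⊓ F N) := by omega
  have hkB : LinearMap.ker B ⊓ F N = LinearMap.ker B :=
    Submodule.eq_of_le_of_finrank_le inf_le_left hfr
  have hkerB : LinearMap.ker B ≤ F N := by
    conv_lhs => rw [← hkB]
    exact inf_le_right
  refine ⟨hkerB, fun k => ?_⟩
  have mapEq : Submodule.map A (F N) = Submodule.map B (F N) := by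
    conv_lhs => rw [← hstab]
    exact Submodule.map_comap_eq_of_surjective hA _
  have closed : Submodule.comap B (Submodule.map A (F N)) ≤ F N := by
    rw [mapEq, Submodule.comap_map_eq]
    exact sup_le le_rfl hkerB
  induction k with
  | zero => rw [hG0]; exact bot_le
  | succ k ih =>
      rw [hGs k]
      exact le_trans (Submodule.comap_mono (Submodule.map_mono ih)) closed

private lemma aux_stable (F : ℕ → Submodule 𝕜 X) (hmono : ∀ k, F k ≤ F (k + 1))
    (hdet : ∀ k l, F k = F l → F (k + 1) = F (l + 1)) :
    ∀ k, finrank 𝕜 X ≤ k → F k = F (finrank 𝕜 X) := by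
  set n := finrank 𝕜 X with hn
  -- there is m ≤ n with F m = F (m+1)
  have hex : ∃ m, m ≤ n ∧ F m = F (m + 1) := by
    by_contra hcon
    push_neg at hcon
    have grow : ∀ m, m ≤ n + 1 → m ≤ finrank 𝕜 (F m) := by
      intro m
      induction m with
      | zero => intro _; exact Nat.zero_le _
      | succ m ih =>
          intro hm
          have h1 : m ≤ finrank 𝕜 (F m) := ih (by omega)
          have hlt : F m < F (m + 1) :=
            lt_of_le_of_ne (hmono m) (hcon m (by omega))
          have := Submodule.finrank_lt_finrank_of_lt hlt
          omega
    have h1 := grow (n + 1) le_rfl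
    have h2 : finrank 𝕜 (F (n + 1)) ≤ n := Submodule.finrank_le _
    omega
  obtain ⟨m, hmn, hm⟩ := hex
  have hconst : ∀ k, m ≤ k → F k = F m := by
    intro k hk
    induction k, hk using Nat.le_induction with
    | base => rfl
    | succ k hk ih => rw [hdet k m ih, ← hm]
  intro k hk
  rw [hconst k (le_trans hmn hk), hconst n hmn]

end aux

/-- Let `A, B : X → Y` be surjective linear maps between finite-dimensional vector spaces.
Define `F₀ = 0`, `F_{k+1} = A⁻¹(B(F_k))` and `G₀ = 0`, `G_{k+1} = B⁻¹(A(G_k))`.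
Then both chains stabilize, their stable values coincide, and `ker A` and `ker B` are
contained in the stable value. -/
theorem stmt_2 (𝕜 X Y : Type*) [Field 𝕜] [AddCommGroup X] [Module 𝕜 X]
    [AddCommGroup Y] [Module 𝕜 Y] [FiniteDimensional 𝕜 X] [FiniteDimensional 𝕜 Y]
    (A B : X →ₗ[𝕜] Y) (hA : Function.Surjective A) (hB : Function.Surjective B)
    (F G : ℕ → Submodule 𝕜 X)
    (hF0 : F 0 = ⊥) (hFs : ∀ k, F (k + 1) = Submodule.comap A (Submodule.map B (F k)))
    (hG0 : G 0 = ⊥) (hGs : ∀ k, G (k + 1) = Submodule.comap B (Submodule.map A (G k))) :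
    ∃ N : ℕ, (∀ k, N ≤ k → F k = F N ∧ G k = G N) ∧ F N = G N ∧
      LinearMap.ker A ≤ F N ∧ LinearMap.ker B ≤ F N := by
  set N := finrank 𝕜 X with hN
  -- monotonicity
  have hFmono : ∀ k, F k ≤ F (k + 1) := by
    intro k
    induction k with
    | zero => rw [hF0]; exact bot_le
    | succ k ih =>
        rw [hFs k, hFs (k + 1)]
        exact Submodule.comap_mono (Submodule.map_mono ih)
  have hGmono : ∀ k, G k ≤ G (k + 1) := by
    intro k
    induction k with
    | zero => rw [hG0]; exact bot_le
    | succ k ih =>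
        rw [hGs k, hGs (k + 1)]
        exact Submodule.comap_mono (Submodule.map_mono ih)
  have hFstab := aux_stable F hFmono (fun k l h => by rw [hFs k, hFs l, h])
  have hGstab := aux_stable G hGmono (fun k l h => by rw [hGs k, hGs l, h])
  have hFN : F (N + 1) = F N := hFstab (N + 1) (by omega)
  have hGN : G (N + 1) = G N := hGstab (N + 1) (by omega)
  obtain ⟨hkBF, hGF⟩ := aux_key A B hA hB F G hG0 hGs N (hFs N) hFN
  obtain ⟨hkAG, hFG⟩ := aux_key B A hB hA G F hF0 hFs N (hGs N) hGN
  have hFGeq : F N = G N := le_antisymm (hFG N) (hGF N)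
  refine ⟨N, fun k hk => ⟨hFstab k hk, hGstab k hk⟩, hFGeq, ?_, hkBF⟩
  rw [hFGeq]; exact hkAG
end

section
/- Let A, B : X → Y be surjective linear maps between finite-dimensional vector spaces over a field, with filtrations F₀ = 0, F_{k+1} = A⁻¹(B(F_k)) and G₀ = 0, G_{k+1} = B⁻¹(A(G_k)). For i, j ≥ 1 set M_{i,j} = (F_i ∩ G_j) / ((F_{i-1} ∩ G_j) + (F_i ∩ G_{j-1})). Then for all i ≥ 2 and j ≥ 1 there is a well-defined linear isomorphism M_{i,j} → M_{i-1,j+1} sending the class of x ∈ F_i ∩ G_j to the class of any y ∈ F_{i-1} ∩ G_{j+1} with B(y) = A(x); in particular such a y always exists, and the resulting map is independent of choices, linear, and bijective. -/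
/-- The subquotient `M_{i,j} = (F_i ∩ G_j) / ((F_{i-1} ∩ G_j) + (F_i ∩ G_{j-1}))`. -/
abbrev Mquot (𝕜 X : Type*) [Field 𝕜] [AddCommGroup X] [Module 𝕜 X]
    (F G : ℕ → Submodule 𝕜 X) (i j : ℕ) :=
  ↥(F i ⊓ G j) ⧸
    Submodule.comap (F i ⊓ G j).subtype ((F (i - 1) ⊓ G j) ⊔ (F i ⊓ G (j - 1)))


section Aux

variable {𝕜 X Y : Type*} [Field 𝕜] [AddCommGroup X] [Module 𝕜 X]
  [AddCommGroup Y] [Module 𝕜 Y] (A B : X →ₗ[𝕜] Y)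
  (P N P' N' : Submodule 𝕜 X)

noncomputable def chooseY (h1 : ∀ x ∈ P, ∃ y, y ∈ P' ∧ B y = A x) (x : ↥P) : X :=
  (h1 x x.2).choose

theorem chooseY_mem (h1 : ∀ x ∈ P, ∃ y, y ∈ P' ∧ B y = A x) (x : ↥P) :
    chooseY A B P P' h1 x ∈ P' := (h1 x x.2).choose_spec.1

theorem chooseY_spec (h1 : ∀ x ∈ P, ∃ y, y ∈ P' ∧ B y = A x) (x : ↥P) :
    B (chooseY A B P P' h1 x) = A x := (h1 x x.2).choose_spec.2

noncomputable def f0 (h1 : ∀ x ∈ P, ∃ y, y ∈ P' ∧ B y = A x) (x : ↥P) :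
    ↥P' ⧸ Submodule.comap P'.subtype N' :=
  Submodule.Quotient.mk ⟨chooseY A B P P' h1 x, chooseY_mem A B P P' h1 x⟩

theorem f0_spec (h1 : ∀ x ∈ P, ∃ y, y ∈ P' ∧ B y = A x)
    (h2 : ∀ y ∈ P', B y = 0 → y ∈ N') (x : ↥P) {y : X} (hy : y ∈ P') (hxy : B y = A x) :
    f0 A B P P' N' h1 x = Submodule.Quotient.mk ⟨y, hy⟩ := by
  unfold f0
  rw [Submodule.Quotient.eq]
  have hm : (chooseY A B P P' h1 x) - y ∈ N' := by
    apply h2 _ (sub_mem (chooseY_mem A B P P' h1 x) hy)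
    rw [map_sub, chooseY_spec, hxy, sub_self]
  simpa [Submodule.mem_comap] using hm

noncomputable def fLin (h1 : ∀ x ∈ P, ∃ y, y ∈ P' ∧ B y = A x)
    (h2 : ∀ y ∈ P', B y = 0 → y ∈ N') :
    ↥P →ₗ[𝕜] (↥P' ⧸ Submodule.comap P'.subtype N') where
  toFun := f0 A B P P' N' h1
  map_add' x₁ x₂ := by
    rw [f0_spec A B P P' N' h1 h2 (x₁ + x₂)
      (add_mem (chooseY_mem A B P P' h1 x₁) (chooseY_mem A B P P' h1 x₂))
      (by rw [map_add, chooseY_spec, chooseY_spec, Submodule.coe_add, map_add])]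
    show _ = f0 A B P P' N' h1 x₁ + f0 A B P P' N' h1 x₂
    unfold f0
    rw [← Submodule.Quotient.mk_add]; rfl
  map_smul' c x := by
    show f0 A B P P' N' h1 (c • x) = c • f0 A B P P' N' h1 x
    rw [f0_spec A B P P' N' h1 h2 (c • x)
      (Submodule.smul_mem _ c (chooseY_mem A B P P' h1 x))
      (by rw [map_smul, chooseY_spec, Submodule.coe_smul, map_smul])]
    unfold f0
    rw [← Submodule.Quotient.mk_smul]; rfl

noncomputable def fQuot (h1 : ∀ x ∈ P, ∃ y, y ∈ P' ∧ B y = A x)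
    (h2 : ∀ y ∈ P', B y = 0 → y ∈ N')
    (h3 : ∀ x ∈ N, ∀ y ∈ P', B y = A x → y ∈ N') :
    (↥P ⧸ Submodule.comap P.subtype N) →ₗ[𝕜] (↥P' ⧸ Submodule.comap P'.subtype N') :=
  Submodule.liftQ _ (fLin A B P P' N' h1 h2) (by
    intro x hx
    rw [LinearMap.mem_ker]
    show f0 A B P P' N' h1 x = 0
    rw [f0_spec A B P P' N' h1 h2 x (chooseY_mem A B P P' h1 x) (chooseY_spec A B P P' h1 x),
      Submodule.Quotient.mk_eq_zero]
    exact h3 _ hx _ (chooseY_mem A B P P' h1 x) (chooseY_spec A B P P' h1 x))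

theorem fQuot_mk (h1 : ∀ x ∈ P, ∃ y, y ∈ P' ∧ B y = A x)
    (h2 : ∀ y ∈ P', B y = 0 → y ∈ N')
    (h3 : ∀ x ∈ N, ∀ y ∈ P', B y = A x → y ∈ N')
    (x : X) (hx : x ∈ P) {y : X} (hy : y ∈ P') (hxy : B y = A x) :
    fQuot A B P N P' N' h1 h2 h3 (Submodule.Quotient.mk ⟨x, hx⟩) =
      Submodule.Quotient.mk ⟨y, hy⟩ := by
  rw [fQuot, Submodule.liftQ_apply]
  exact f0_spec A B P P' N' h1 h2 ⟨x, hx⟩ hy hxy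

end Aux

/-- For surjective linear maps `A, B : X → Y` between finite-dimensional vector spaces,
with filtrations `F₀ = 0`, `F_{k+1} = A⁻¹(B(F_k))`, `G₀ = 0`, `G_{k+1} = B⁻¹(A(G_k))`,
for `i ≥ 2`, `j ≥ 1` there is a well-defined linear isomorphism
`M_{i,j} → M_{i-1,j+1}` sending the class of `x ∈ F_i ∩ G_j` to the class of any
`y ∈ F_{i-1} ∩ G_{j+1}` with `B y = A x`; such a `y` always exists. -/
theorem stmt_3 (𝕜 X Y : Type*) [Field 𝕜] [AddCommGroup X] [Module 𝕜 X]
    [AddCommGroup Y] [Module 𝕜 Y] [FiniteDimensional 𝕜 X] [FiniteDimensional 𝕜 Y]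
    (A B : X →ₗ[𝕜] Y) (hA : Function.Surjective A) (hB : Function.Surjective B)
    (F G : ℕ → Submodule 𝕜 X)
    (hF0 : F 0 = ⊥) (hFs : ∀ k, F (k + 1) = Submodule.comap A (Submodule.map B (F k)))
    (hG0 : G 0 = ⊥) (hGs : ∀ k, G (k + 1) = Submodule.comap B (Submodule.map A (G k)))
    (i j : ℕ) (hi : 2 ≤ i) (hj : 1 ≤ j) :
    (∀ x ∈ F i ⊓ G j, ∃ y ∈ F (i - 1) ⊓ G (j + 1), B y = A x) ∧
    ∃ e : Mquot 𝕜 X F G i j ≃ₗ[𝕜] Mquot 𝕜 X F G (i - 1) (j + 1),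
      ∀ (x : X) (hx : x ∈ F i ⊓ G j) (y : X) (hy : y ∈ F (i - 1) ⊓ G (j + 1)),
        B y = A x →
          e (Submodule.Quotient.mk ⟨x, hx⟩) = Submodule.Quotient.mk ⟨y, hy⟩ := by
  obtain ⟨i0, rfl⟩ : ∃ i0, i = i0 + 2 := ⟨i - 2, by omega⟩
  obtain ⟨j0, rfl⟩ : ∃ j0, j = j0 + 1 := ⟨j - 1, by omega⟩
  clear hi hj hA hB
  simp only [show i0 + 2 - 1 = i0 + 1 from rfl, show j0 + 1 + 1 = j0 + 2 from rfl]
  -- monotonicity of the filtrations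
  have hFmono : Monotone F := by
    apply monotone_nat_of_le_succ
    intro k
    induction k with
    | zero => rw [hF0]; exact bot_le
    | succ n ih => rw [hFs, hFs]; exact Submodule.comap_mono (Submodule.map_mono ih)
  have hGmono : Monotone G := by
    apply monotone_nat_of_le_succ
    intro k
    induction k with
    | zero => rw [hG0]; exact bot_le
    | succ n ih => rw [hGs, hGs]; exact Submodule.comap_mono (Submodule.map_mono ih)
  have hF1 : F 1 = LinearMap.ker A := by
    rw [hFs, hF0, Submodule.map_bot, Submodule.comap_bot]
  have hG1 : G 1 = LinearMap.ker B := by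
    rw [hGs, hG0, Submodule.map_bot, Submodule.comap_bot]
  -- existence lemmas
  have E1 : ∀ a b, ∀ x ∈ F (a + 1) ⊓ G b, ∃ y, y ∈ F a ⊓ G (b + 1) ∧ B y = A x := by
    intro a b x hx
    obtain ⟨hx1, hx2⟩ := Submodule.mem_inf.1 hx
    rw [hFs, Submodule.mem_comap, Submodule.mem_map] at hx1
    obtain ⟨y, hyF, hyB⟩ := hx1
    refine ⟨y, Submodule.mem_inf.2 ⟨hyF, ?_⟩, hyB⟩
    rw [hGs, Submodule.mem_comap, Submodule.mem_map]
    exact ⟨x, hx2, hyB.symm⟩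
  have E2 : ∀ a b, ∀ y ∈ F a ⊓ G (b + 1), ∃ x, x ∈ F (a + 1) ⊓ G b ∧ A x = B y := by
    intro a b y hy
    obtain ⟨hy1, hy2⟩ := Submodule.mem_inf.1 hy
    rw [hGs, Submodule.mem_comap, Submodule.mem_map] at hy2
    obtain ⟨x, hxG, hxA⟩ := hy2
    refine ⟨x, Submodule.mem_inf.2 ⟨?_, hxG⟩, hxA⟩
    rw [hFs, Submodule.mem_comap, Submodule.mem_map]
    exact ⟨y, hy1, hxA.symm⟩
  -- the four hypotheses for the forward map
  have h1 : ∀ x ∈ F (i0 + 2) ⊓ G (j0 + 1),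
      ∃ y, y ∈ F (i0 + 1) ⊓ G (j0 + 2) ∧ B y = A x := E1 (i0 + 1) (j0 + 1)
  have h2 : ∀ y ∈ F (i0 + 1) ⊓ G (j0 + 2), B y = 0 →
      y ∈ (F i0 ⊓ G (j0 + 2)) ⊔ (F (i0 + 1) ⊓ G (j0 + 1)) := by
    intro y hy h0
    apply Submodule.mem_sup_right
    have hyk : y ∈ G 1 := by rw [hG1]; exact LinearMap.mem_ker.2 h0
    exact Submodule.mem_inf.2 ⟨(Submodule.mem_inf.1 hy).1,
      hGmono (show 1 ≤ j0 + 1 by omega) hyk⟩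
  have h3 : ∀ x ∈ (F (i0 + 1) ⊓ G (j0 + 1)) ⊔ (F (i0 + 2) ⊓ G j0),
      ∀ y ∈ F (i0 + 1) ⊓ G (j0 + 2), B y = A x →
      y ∈ (F i0 ⊓ G (j0 + 2)) ⊔ (F (i0 + 1) ⊓ G (j0 + 1)) := by
    intro x hx y hy hxy
    obtain ⟨u, huN, v, hvN, rfl⟩ := Submodule.mem_sup.1 hx
    obtain ⟨yu, hyu, hyuB⟩ := E1 i0 (j0 + 1) u huN
    obtain ⟨yv, hyv, hyvB⟩ := E1 (i0 + 1) j0 v hvN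
    have hsum : yu + yv ∈ (F i0 ⊓ G (j0 + 2)) ⊔ (F (i0 + 1) ⊓ G (j0 + 1)) :=
      add_mem (Submodule.mem_sup_left hyu) (Submodule.mem_sup_right hyv)
    have hsumP' : yu + yv ∈ F (i0 + 1) ⊓ G (j0 + 2) := by
      obtain ⟨hu1, hu2⟩ := Submodule.mem_inf.1 hyu
      obtain ⟨hv1, hv2⟩ := Submodule.mem_inf.1 hyv
      exact Submodule.mem_inf.2 ⟨add_mem (hFmono (by omega) hu1) hv1,
        add_mem hu2 (hGmono (by omega) hv2)⟩
    have hdiff : y - (yu + yv) ∈ (F i0 ⊓ G (j0 + 2)) ⊔ (F (i0 + 1) ⊓ G (j0 + 1)) := by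
      apply h2 _ (sub_mem hy hsumP')
      rw [map_sub, map_add, hxy, hyuB, hyvB, map_add, sub_self]
    simpa using add_mem hdiff hsum
  -- the four hypotheses for the inverse map
  have h1' : ∀ y ∈ F (i0 + 1) ⊓ G (j0 + 2),
      ∃ x, x ∈ F (i0 + 2) ⊓ G (j0 + 1) ∧ A x = B y := E2 (i0 + 1) (j0 + 1)
  have h2' : ∀ x ∈ F (i0 + 2) ⊓ G (j0 + 1), A x = 0 →
      x ∈ (F (i0 + 1) ⊓ G (j0 + 1)) ⊔ (F (i0 + 2) ⊓ G j0) := by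
    intro x hx h0
    apply Submodule.mem_sup_left
    have hxk : x ∈ F 1 := by rw [hF1]; exact LinearMap.mem_ker.2 h0
    exact Submodule.mem_inf.2 ⟨hFmono (show 1 ≤ i0 + 1 by omega) hxk,
      (Submodule.mem_inf.1 hx).2⟩
  have h3' : ∀ y ∈ (F i0 ⊓ G (j0 + 2)) ⊔ (F (i0 + 1) ⊓ G (j0 + 1)),
      ∀ x ∈ F (i0 + 2) ⊓ G (j0 + 1), A x = B y →
      x ∈ (F (i0 + 1) ⊓ G (j0 + 1)) ⊔ (F (i0 + 2) ⊓ G j0) := by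
    intro y hy x hx hxy
    obtain ⟨u, huN, v, hvN, rfl⟩ := Submodule.mem_sup.1 hy
    obtain ⟨xu, hxu, hxuA⟩ := E2 i0 (j0 + 1) u huN
    obtain ⟨xv, hxv, hxvA⟩ := E2 (i0 + 1) j0 v hvN
    have hsum : xu + xv ∈ (F (i0 + 1) ⊓ G (j0 + 1)) ⊔ (F (i0 + 2) ⊓ G j0) :=
      add_mem (Submodule.mem_sup_left hxu) (Submodule.mem_sup_right hxv)
    have hsumP : xu + xv ∈ F (i0 + 2) ⊓ G (j0 + 1) := by
      obtain ⟨hu1, hu2⟩ := Submodule.mem_inf.1 hxu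
      obtain ⟨hv1, hv2⟩ := Submodule.mem_inf.1 hxv
      exact Submodule.mem_inf.2 ⟨add_mem (hFmono (by omega) hu1) hv1,
        add_mem hu2 (hGmono (by omega) hv2)⟩
    have hdiff : x - (xu + xv) ∈ (F (i0 + 1) ⊓ G (j0 + 1)) ⊔ (F (i0 + 2) ⊓ G j0) := by
      apply h2' _ (sub_mem hx hsumP)
      rw [map_sub, map_add, hxy, hxuA, hxvA, map_add, sub_self]
    simpa using add_mem hdiff hsum
  refine ⟨fun x hx => ?_, ?_⟩
  · obtain ⟨y, hy, hxy⟩ := h1 x hx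
    exact ⟨y, hy, hxy⟩
  · refine ⟨LinearEquiv.ofLinear
      (fQuot A B (F (i0 + 2) ⊓ G (j0 + 1)) ((F (i0 + 1) ⊓ G (j0 + 1)) ⊔ (F (i0 + 2) ⊓ G j0))
        (F (i0 + 1) ⊓ G (j0 + 2)) ((F i0 ⊓ G (j0 + 2)) ⊔ (F (i0 + 1) ⊓ G (j0 + 1))) h1 h2 h3)
      (fQuot B A (F (i0 + 1) ⊓ G (j0 + 2)) ((F i0 ⊓ G (j0 + 2)) ⊔ (F (i0 + 1) ⊓ G (j0 + 1)))
        (F (i0 + 2) ⊓ G (j0 + 1)) ((F (i0 + 1) ⊓ G (j0 + 1)) ⊔ (F (i0 + 2) ⊓ G j0)) h1' h2' h3')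
      ?_ ?_, ?_⟩
    · refine LinearMap.ext fun q => ?_
      obtain ⟨⟨y, hy⟩, rfl⟩ := Submodule.Quotient.mk_surjective _ q
      obtain ⟨x, hx, hxy⟩ := h1' y hy
      exact (congrArg _ (fQuot_mk B A _ _ _ _ h1' h2' h3' y hy hx hxy)).trans
        (fQuot_mk A B _ _ _ _ h1 h2 h3 x hx hy hxy.symm)
    · refine LinearMap.ext fun q => ?_
      obtain ⟨⟨x, hx⟩, rfl⟩ := Submodule.Quotient.mk_surjective _ q
      obtain ⟨y, hy, hxy⟩ := h1 x hx
      exact (congrArg _ (fQuot_mk A B _ _ _ _ h1 h2 h3 x hx hy hxy)).trans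
        (fQuot_mk B A _ _ _ _ h1' h2' h3' y hy hx hxy.symm)
    · intro x hx y hy hxy
      rw [LinearEquiv.ofLinear_apply]
      exact fQuot_mk A B _ _ _ _ h1 h2 h3 x hx hy hxy
end

section
/- Let Q be a finite quiver and R a set of composable pairs of arrows of Q (pairs (a,b) with the target of a equal to the source of b). Suppose that for every cyclic path a₁a₂⋯a_n in Q (with the target of a_i equal to the source of a_{i+1} for i taken mod n) there exists some i with (a_i, a_{i+1 mod n}) ∈ R. Then there exists an integer L such that every path in Q of length at least L contains a consecutive pair of arrows belonging to R. Consequently only finitely many paths avoid all relations in R. -/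
lemma dup_decomp {α : Type*} {l : List α} (h : ¬ l.Nodup) :
    ∃ (l1 l2 l3 : List α) (x : α), l = l1 ++ x :: l2 ++ x :: l3 := by
  induction l with
  | nil => simp at h
  | cons a tl ih =>
    by_cases ha : a ∈ tl
    · obtain ⟨l2, l3, rfl⟩ := List.append_of_mem ha
      exact ⟨[], l2, l3, a, by simp⟩
    · have : ¬ tl.Nodup := fun hn => h (hn.cons ha)
      obtain ⟨l1, l2, l3, x, rfl⟩ := ih this
      exact ⟨a :: l1, l2, l3, x, by simp⟩

/-- Let `Q` be a finite quiver (finite vertex set `Q0`, finite arrow set `Q1`, source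
and target maps `s t : Q1 → Q0`) and `R` a set of composable pairs of arrows. Suppose
every cyclic path in `Q` contains some (cyclically) consecutive pair of arrows in `R`.
Then there is `L` such that every path of length at least `L` contains a consecutive
pair of arrows in `R`; consequently only finitely many paths avoid all relations. -/
theorem stmt_5 (Q0 Q1 : Type*) [Fintype Q0] [Fintype Q1] (s t : Q1 → Q0)
    (R : Set (Q1 × Q1)) (hR : ∀ p ∈ R, t p.1 = s p.2)
    (hcyc : ∀ (l : List Q1) (h : l ≠ []), l.Chain' (fun a b => t a = s b) →
      t (l.getLast h) = s (l.head h) →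
      (¬ l.Chain' (fun a b => (a, b) ∉ R) ∨ (l.getLast h, l.head h) ∈ R)) :
    (∃ L : ℕ, ∀ l : List Q1, l.Chain' (fun a b => t a = s b) → L ≤ l.length →
      ¬ l.Chain' (fun a b => (a, b) ∉ R)) ∧
    {l : List Q1 | l.Chain' (fun a b => t a = s b) ∧
      l.Chain' (fun a b => (a, b) ∉ R)}.Finite := by
  -- key: any chain avoiding R is nodup
  have key : ∀ l : List Q1, l.Chain' (fun a b => t a = s b) →
      l.Chain' (fun a b => (a, b) ∉ R) → l.Nodup := by
    intro l hch havoid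
    by_contra hnd
    obtain ⟨l1, l2, l3, x, rfl⟩ := dup_decomp hnd
    -- the cycle is x :: l2
    have hinfix : (x :: l2) ++ (x :: l3) <:+: l1 ++ x :: l2 ++ x :: l3 :=
      ⟨l1, [], by simp⟩
    have hch2 : ((x :: l2) ++ (x :: l3)).Chain' (fun a b => t a = s b) :=
      hch.infix hinfix
    have hav2 : ((x :: l2) ++ (x :: l3)).Chain' (fun a b => (a, b) ∉ R) :=
      havoid.infix hinfix
    unfold List.Chain' at hch2 hav2; rw [List.isChain_append] at hch2 hav2
    have hne : (x :: l2) ≠ [] := by simp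
    have hlast : t ((x :: l2).getLast hne) = s ((x :: l2).head hne) := by
      have := hch2.2.2 ((x :: l2).getLast hne) (by rw [List.getLast?_eq_getLast hne]; rfl) x (by simp)
      simpa using this
    have hwrap : ((x :: l2).getLast hne, (x :: l2).head hne) ∉ R := by
      have := hav2.2.2 ((x :: l2).getLast hne) (by rw [List.getLast?_eq_getLast hne]; rfl) x (by simp)
      simpa using this
    rcases hcyc (x :: l2) hne hch2.1 hlast with h | h
    · exact h hav2.1
    · exact hwrap h
  constructor
  · refine ⟨Fintype.card Q1 + 1, fun l hch hlen hav => ?_⟩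
    have := (key l hch hav).length_le_card
    omega
  · apply (List.finite_length_le Q1 (Fintype.card Q1)).subset
    rintro l ⟨h1, h2⟩
    exact (key l h1 h2).length_le_card
end

section
/- Fix a real number a > −1 and real numbers 0 < s ≤ r, and a point z₀ ∈ ℂ with |z₀| = r. Then the infimum, over all C¹ paths γ : [0,1] → ℂ ∖ {0} with γ(0) = z₀ and |γ(1)| = s, of the weighted length ∫₀¹ |γ(t)|^a |γ′(t)| dt, equals (r^{a+1} − s^{a+1})/(a+1). -/
open MeasureTheory

lemma abs_deriv_aux {γ γ' : ℝ → ℂ} {S : Set ℝ} {t : ℝ}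
    (h : HasDerivWithinAt γ (γ' t) S t) (hne : γ t ≠ 0) :
    HasDerivWithinAt (fun u => ‖γ u‖)
      (((γ t).re * (γ' t).re + (γ t).im * (γ' t).im) / ‖γ t‖) S t := by
  have hre : HasDerivWithinAt (fun u => (γ u).re) ((γ' t).re) S t :=
    Complex.reCLM.hasFDerivAt.comp_hasDerivWithinAt t h
  have him : HasDerivWithinAt (fun u => (γ u).im) ((γ' t).im) S t :=
    Complex.imCLM.hasFDerivAt.comp_hasDerivWithinAt t h
  have hsq : HasDerivWithinAt (fun u => (γ u).re * (γ u).re + (γ u).im * (γ u).im)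
      ((γ' t).re * (γ t).re + (γ t).re * (γ' t).re +
        ((γ' t).im * (γ t).im + (γ t).im * (γ' t).im)) S t :=
    (hre.mul hre).add (him.mul him)
  have hx : (γ t).re * (γ t).re + (γ t).im * (γ t).im ≠ 0 := by
    have := Complex.normSq_pos.2 hne
    rw [Complex.normSq_apply] at this
    exact ne_of_gt this
  have hsqrt := (Real.hasDerivAt_sqrt hx).comp_hasDerivWithinAt t hsq
  have hfun : (Real.sqrt ∘ fun u => (γ u).re * (γ u).re + (γ u).im * (γ u).im)
      = fun u => ‖γ u‖ := by
    funext u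
    simp [Complex.norm_def, Complex.normSq_apply, Function.comp]
  rw [hfun] at hsqrt
  convert hsqrt using 1
  case e'_4 => rfl
  case e'_5 => rfl
  rw [Complex.norm_def, Complex.normSq_apply]
  field_simp
  ring

lemma cs_aux (z z' : ℂ) :
    |z.re * z'.re + z.im * z'.im| ≤ ‖z‖ * ‖z'‖ := by
  have h : (z.re * z'.re + z.im * z'.im)^2 ≤ (‖z‖ * ‖z'‖)^2 := by
    rw [mul_pow, Complex.sq_norm, Complex.sq_norm, Complex.normSq_apply, Complex.normSq_apply]
    nlinarith [sq_nonneg (z.re * z'.im - z.im * z'.re)]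
  have h2 := Real.sqrt_le_sqrt h
  rwa [Real.sqrt_sq_eq_abs, Real.sqrt_sq_eq_abs,
    abs_of_nonneg (by positivity : (0:ℝ) ≤ ‖z‖ * ‖z'‖)] at h2

set_option linter.unnecessarySeqFocus false in
/-- Fix `a > −1`, `0 < s ≤ r`, `z₀ ∈ ℂ` with `|z₀| = r`. -/
theorem stmt_12 (a r s : ℝ) (ha : -1 < a) (hs : 0 < s) (hsr : s ≤ r)
    (z₀ : ℂ) (hz₀ : ‖z₀‖ = r) :
    IsGLB {ℓ : ℝ | ∃ γ γ' : ℝ → ℂ,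
        ContinuousOn γ' (Set.Icc 0 1) ∧
        (∀ t ∈ Set.Icc (0 : ℝ) 1, HasDerivWithinAt γ (γ' t) (Set.Icc 0 1) t) ∧
        (∀ t ∈ Set.Icc (0 : ℝ) 1, γ t ≠ 0) ∧
        γ 0 = z₀ ∧ ‖γ 1‖ = s ∧
        ℓ = ∫ t in (0 : ℝ)..1, ‖γ t‖ ^ a * ‖γ' t‖}
      ((r ^ (a + 1) - s ^ (a + 1)) / (a + 1)) := by
  apply IsLeast.isGLB
  constructor
  · -- membership: radial path
    have hr : 0 < r := lt_of_lt_of_le hs hsr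
    have ha1 : (0:ℝ) < a + 1 := by linarith
    have ha1' : a + 1 ≠ 0 := ne_of_gt ha1
    set c : ℝ := (r - s) / r with hc
    have hcr : c * r = r - s := div_mul_cancel₀ _ (ne_of_gt hr)
    have hc0 : 0 ≤ c := div_nonneg (by linarith) hr.le
    have hclt : c ≤ 1 := by rw [hc, div_le_one hr]; linarith
    have hpos : ∀ t ∈ Set.Icc (0:ℝ) 1, 0 < 1 - t * c := by
      intro t ht
      have h1 : t * c ≤ 1 * c := mul_le_mul_of_nonneg_right ht.2 hc0
      have h2 : c < 1 := by rw [hc, div_lt_one hr]; linarith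
      nlinarith
    have hupos : ∀ t ∈ Set.Icc (0:ℝ) 1, 0 < r - t * (r - s) := by
      intro t ht
      have h1 := hpos t ht
      have h2 : r - t * (r - s) = r * (1 - t * c) := by rw [← hcr]; ring
      rw [h2]; positivity
    have habs : ∀ t ∈ Set.Icc (0:ℝ) 1,
        ‖((1 - t * c : ℝ) : ℂ) * z₀‖ = r - t * (r - s) := by
      intro t ht
      rw [norm_mul, Complex.norm_real, Real.norm_eq_abs, hz₀, abs_of_pos (hpos t ht), hc]
      field_simp
    refine ⟨fun t => ((1 - t * c : ℝ) : ℂ) * z₀, fun _ => ((-c : ℝ) : ℂ) * z₀,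
      continuousOn_const, ?_, ?_, by simp, ?_, ?_⟩
    · intro t _
      have h1 : HasDerivWithinAt (fun t : ℝ => 1 - t * c) (-c) (Set.Icc 0 1) t := by
        simpa using (HasDerivWithinAt.const_sub 1
          ((hasDerivWithinAt_id t _).mul_const c))
      have h2 := (Complex.ofRealCLM.hasFDerivAt.comp_hasDerivWithinAt t h1).mul_const z₀
      simpa using h2
    · intro t ht h
      have h' : ((1 - t * c : ℝ) : ℂ) * z₀ = 0 := h
      have h2 := habs t ht
      rw [h'] at h2
      simp at h2
      have := hupos t ht
      linarith [h2]
    · have h2 := habs 1 (by norm_num)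
      simpa using h2.trans (by ring)
    · -- the integral
      have hint : (∫ t in (0:ℝ)..1,
          ‖((1 - t * c : ℝ) : ℂ) * z₀‖ ^ a * ‖((-c : ℝ) : ℂ) * z₀‖)
          = ∫ t in (0:ℝ)..1, (r - t * (r - s)) ^ a * (r - s) := by
        apply intervalIntegral.integral_congr
        intro t ht
        rw [Set.uIcc_of_le (by norm_num : (0:ℝ) ≤ 1)] at ht
        show ‖((1 - t * c : ℝ) : ℂ) * z₀‖ ^ a * ‖((-c : ℝ) : ℂ) * z₀‖
          = (r - t * (r - s)) ^ a * (r - s)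
        rw [habs t ht, norm_mul, Complex.norm_real, Real.norm_eq_abs, hz₀, abs_neg, abs_of_nonneg hc0, hcr]
      rw [hint]
      have hderiv : ∀ t ∈ Set.uIcc (0:ℝ) 1,
          HasDerivAt (fun t => -((r - t * (r - s)) ^ (a+1)) / (a+1)) ((r - t * (r - s)) ^ a * (r - s)) t := by
        intro t ht
        rw [Set.uIcc_of_le (by norm_num : (0:ℝ) ≤ 1)] at ht
        have hu : HasDerivAt (fun t : ℝ => r - t * (r - s)) (-(r - s)) t := by
          simpa using HasDerivAt.const_sub r ((hasDerivAt_id t).mul_const (r - s))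
        have h3 := ((hu.rpow_const (p := a+1) (Or.inl (ne_of_gt (hupos t ht)))).neg).div_const (a+1)
        convert h3 using 1
        case e'_4 => rfl
        case e'_5 => rfl
        case e'_8 => rfl
        rw [add_sub_cancel_right]
        field_simp
      have hcont : ContinuousOn (fun t => (r - t * (r - s)) ^ a * (r - s)) (Set.uIcc (0:ℝ) 1) := by
        apply ContinuousOn.mul _ continuousOn_const
        apply ContinuousOn.rpow_const
        · fun_prop
        · intro t ht
          rw [Set.uIcc_of_le (by norm_num : (0:ℝ) ≤ 1)] at ht
          exact Or.inl (ne_of_gt (hupos t ht))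
      rw [intervalIntegral.integral_eq_sub_of_hasDerivAt hderiv
        (hcont.intervalIntegrable)]
      norm_num
      ring
  · -- lower bound
    rintro ℓ ⟨γ, γ', hc, hd, hne, h0, h1, rfl⟩
    have hr : 0 < r := lt_of_lt_of_le hs hsr
    have ha1 : (0:ℝ) < a + 1 := by linarith
    have ha1' : a + 1 ≠ 0 := ne_of_gt ha1
    set f : ℝ → ℝ := fun t => ‖γ t‖ with hf
    set d : ℝ → ℝ := fun t =>
      ((γ t).re * (γ' t).re + (γ t).im * (γ' t).im) / f t with hdd
    have hfpos : ∀ t ∈ Set.Icc (0:ℝ) 1, 0 < f t := fun t ht =>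
      norm_pos_iff.2 (hne t ht)
    have hfd : ∀ t ∈ Set.Icc (0:ℝ) 1, HasDerivWithinAt f (d t) (Set.Icc 0 1) t :=
      fun t ht => abs_deriv_aux (hd t ht) (hne t ht)
    have hγcont : ContinuousOn γ (Set.Icc 0 1) := fun t ht =>
      (hd t ht).continuousWithinAt
    have hfcont : ContinuousOn f (Set.Icc 0 1) :=
      continuous_norm.comp_continuousOn hγcont
    have hdcont : ContinuousOn d (Set.Icc 0 1) := by
      apply ContinuousOn.div
      · exact ((Complex.continuous_re.comp_continuousOn hγcont).mul
          (Complex.continuous_re.comp_continuousOn hc)).add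
          ((Complex.continuous_im.comp_continuousOn hγcont).mul
          (Complex.continuous_im.comp_continuousOn hc))
      · exact hfcont
      · exact fun t ht => ne_of_gt (hfpos t ht)
    have hdbound : ∀ t ∈ Set.Icc (0:ℝ) 1, |d t| ≤ ‖γ' t‖ := by
      intro t ht
      rw [hdd]
      rw [abs_div, abs_of_pos (hfpos t ht)]
      rw [div_le_iff₀ (hfpos t ht)]
      calc |(γ t).re * (γ' t).re + (γ t).im * (γ' t).im|
          ≤ ‖γ t‖ * ‖γ' t‖ := cs_aux _ _
        _ = ‖γ' t‖ * f t := by rw [hf]; ring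
    -- FTC for H = f^(a+1)/(a+1)
    have hH : ∀ t ∈ Set.Icc (0:ℝ) 1,
        HasDerivWithinAt (fun u => f u ^ (a+1) / (a+1)) (f t ^ a * d t) (Set.Icc 0 1) t := by
      intro t ht
      have h3 := ((hfd t ht).rpow_const (p := a+1)
        (Or.inl (ne_of_gt (hfpos t ht)))).div_const (a+1)
      convert h3 using 1
      case e'_4 => rfl
      case e'_5 => rfl
      rw [add_sub_cancel_right]
      field_simp
    have hintd : ContinuousOn (fun t => f t ^ a * d t) (Set.Icc 0 1) := by
      apply ContinuousOn.mul _ hdcont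
      exact hfcont.rpow_const (fun t ht => Or.inl (ne_of_gt (hfpos t ht)))
    have hftc : ∫ t in (0:ℝ)..1, f t ^ a * d t
        = f 1 ^ (a+1) / (a+1) - f 0 ^ (a+1) / (a+1) := by
      exact intervalIntegral.integral_eq_sub_of_hasDeriv_right_of_le (by norm_num)
        ((hfcont.rpow_const (fun t ht => Or.inl (ne_of_gt (hfpos t ht)))).div_const _)
        (fun t ht => (((hH t (Set.mem_Icc_of_Ioo ht)).hasDerivAt
          (Icc_mem_nhds ht.1 ht.2))).hasDerivWithinAt)
        ((hintd.mono (by rw [Set.uIcc_of_le] <;> norm_num)).intervalIntegrable)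
    have hfval0 : f 0 = r := by rw [hf]; simp [h0, hz₀]
    have hfval1 : f 1 = s := h1
    -- pointwise bound and integral mono
    have hrhs_cont : ContinuousOn (fun t => ‖γ t‖ ^ a * ‖γ' t‖)
        (Set.Icc 0 1) := by
      apply ContinuousOn.mul _ (continuous_norm.comp_continuousOn hc)
      exact hfcont.rpow_const (fun t ht => Or.inl (ne_of_gt (hfpos t ht)))
    have hmono : ∫ t in (0:ℝ)..1, -(f t ^ a * d t)
        ≤ ∫ t in (0:ℝ)..1, ‖γ t‖ ^ a * ‖γ' t‖ := by
      apply intervalIntegral.integral_mono_on (by norm_num)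
      · exact ((hintd.neg).mono (by rw [Set.uIcc_of_le] <;> norm_num)).intervalIntegrable
      · exact (hrhs_cont.mono (by rw [Set.uIcc_of_le] <;> norm_num)).intervalIntegrable
      · intro t ht
        have hb := hdbound t ht
        have hfa : 0 ≤ f t ^ a := Real.rpow_nonneg (hfpos t ht).le a
        have : -(f t ^ a * d t) ≤ f t ^ a * |d t| := by
          rw [← mul_neg]
          exact mul_le_mul_of_nonneg_left (neg_le_abs _) hfa
        calc -(f t ^ a * d t) ≤ f t ^ a * |d t| := this
          _ ≤ f t ^ a * ‖γ' t‖ := mul_le_mul_of_nonneg_left hb hfa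
    rw [intervalIntegral.integral_neg, hftc, hfval0, hfval1] at hmono
    have heq : (r ^ (a + 1) - s ^ (a + 1)) / (a + 1)
        = -(s ^ (a + 1) / (a + 1) - r ^ (a + 1) / (a + 1)) := by ring
    linarith [hmono]
end
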